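/- Let Σ and N be Hermitian positive definite complex s×s matrices, Σ̃ = Σ + N, Ñ = (√((I+Σ̃⁻¹)⁻¹) (N⁻¹ − Σ̃⁻¹) √((I+Σ̃⁻¹)⁻¹))⁻¹, and T = √(Σ̃(Σ̃+I)). Then (Ñ + I)⁻¹ Σ̃ = T⁻¹ Σ (N + I)⁻¹ T. -/

import Mathlib

open Matrix
open scoped ComplexOrder Classical

/-- The (Hermitian positive semidefinite) square root of a positive semidefinite
complex matrix; junk value `0` if the matrix is not positive semidefinite.
For a Hermitian positive definite matrix this is its unique Hermitian positive
definite square root. -/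
noncomputable def msqrt {s : ℕ} (A : Matrix (Fin s) (Fin s) ℂ) :
    Matrix (Fin s) (Fin s) ℂ :=
  if h : A.PosSemidef then
    (h.1.eigenvectorUnitary : Matrix (Fin s) (Fin s) ℂ) *
      diagonal (fun i => ((Real.sqrt (h.1.eigenvalues i) : ℝ) : ℂ)) *
      (star h.1.eigenvectorUnitary : Matrix (Fin s) (Fin s) ℂ)
  else 0

section Helpers

variable {n : Type*} [Fintype n] [DecidableEq n]

noncomputable def Matrix.PosSemidef.sqrt {A : Matrix n n ℂ} (hA : A.PosSemidef) : Matrix n n ℂ :=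
  (hA.1.eigenvectorUnitary : Matrix n n ℂ) *
    diagonal (fun i => ((Real.sqrt (hA.1.eigenvalues i) : ℝ) : ℂ)) *
    (star hA.1.eigenvectorUnitary : Matrix n n ℂ)

lemma Matrix.PosSemidef.posSemidef_sqrt {A : Matrix n n ℂ} (hA : A.PosSemidef) :
    hA.sqrt.PosSemidef := by
  have hD : (diagonal (fun i => ((Real.sqrt (hA.1.eigenvalues i) : ℝ) : ℂ))).PosSemidef := by
    rw [posSemidef_diagonal_iff]
    intro i
    exact_mod_cast Real.sqrt_nonneg _
  exact hD.mul_mul_conjTranspose_same (hA.1.eigenvectorUnitary : Matrix n n ℂ)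

lemma Matrix.PosSemidef.sqrt_mul_self {A : Matrix n n ℂ} (hA : A.PosSemidef) :
    hA.sqrt * hA.sqrt = A := by
  have hUU : star (hA.1.eigenvectorUnitary : Matrix n n ℂ) * hA.1.eigenvectorUnitary = 1 :=
    Matrix.mem_unitaryGroup_iff'.mp hA.1.eigenvectorUnitary.2
  have hspec : A = (hA.1.eigenvectorUnitary : Matrix n n ℂ) *
      diagonal (RCLike.ofReal ∘ hA.1.eigenvalues) * star (hA.1.eigenvectorUnitary : Matrix n n ℂ) :=
    hA.1.spectral_theorem
  conv_rhs => rw [hspec]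
  simp only [Matrix.PosSemidef.sqrt, mul_assoc]
  rw [← mul_assoc (star _) _ (diagonal _ * _), hUU, one_mul, ← mul_assoc (diagonal _),
    diagonal_mul_diagonal]
  congr 3
  funext i
  simp only [Function.comp_apply]
  rw [← Complex.ofReal_mul, Real.mul_self_sqrt (hA.eigenvalues_nonneg i)]
  rfl

open scoped MatrixOrder in
lemma Matrix.PosSemidef.eq_of_sq_eq_sq {A B : Matrix n n ℂ} (hA : A.PosSemidef)
    (hB : B.PosSemidef) (h : A ^ 2 = B ^ 2) : A = B :=
  (CFC.sq_eq_sq_iff A B hA.nonneg hB.nonneg).mp h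

lemma commute_diagonal_of_commute_diagonal {d e : n → ℂ} {B : Matrix n n ℂ}
    (hde : ∀ i j, d i = d j → e i = e j)
    (h : Matrix.diagonal d * B = B * Matrix.diagonal d) :
    Matrix.diagonal e * B = B * Matrix.diagonal e := by
  ext i j
  have hij : (Matrix.diagonal d * B) i j = (B * Matrix.diagonal d) i j := by rw [h]
  rw [Matrix.diagonal_mul, Matrix.mul_diagonal] at hij
  rw [Matrix.diagonal_mul, Matrix.mul_diagonal]
  rcases eq_or_ne (d i) (d j) with he | he
  · rw [hde i j he, mul_comm]
  · have hd' : d i * B i j = d j * B i j := by linear_combination hij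
    have hB : B i j = 0 := by
      by_contra hB
      exact he (mul_right_cancel₀ hB hd')
    simp [hB]

lemma commute_sqrt {A B : Matrix n n ℂ} (hA : A.PosSemidef) (h : A * B = B * A) :
    hA.sqrt * B = B * hA.sqrt := by
  set U : Matrix n n ℂ := (hA.1.eigenvectorUnitary : Matrix n n ℂ)
  have hUU : star U * U = 1 := Matrix.mem_unitaryGroup_iff'.mp hA.1.eigenvectorUnitary.2
  have hUU' : U * star U = 1 := Matrix.mem_unitaryGroup_iff.mp hA.1.eigenvectorUnitary.2
  have c1 : ∀ X : Matrix n n ℂ, star U * (U * X) = X := fun X => by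
    rw [← mul_assoc, hUU, one_mul]
  have c2 : ∀ X : Matrix n n ℂ, U * (star U * X) = X := fun X => by
    rw [← mul_assoc, hUU', one_mul]
  set d : n → ℂ := RCLike.ofReal ∘ hA.1.eigenvalues with hd
  set e : n → ℂ := (↑) ∘ Real.sqrt ∘ hA.1.eigenvalues with he
  have hspec : A = U * Matrix.diagonal d * star U := hA.1.spectral_theorem
  have h2 : (U * Matrix.diagonal d * star U) * B = B * (U * Matrix.diagonal d * star U) := by
    rw [← hspec]; exact h
  have key : Matrix.diagonal d * (star U * B * U) = (star U * B * U) * Matrix.diagonal d := by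
    calc Matrix.diagonal d * (star U * B * U)
        = star U * ((U * Matrix.diagonal d * star U) * B) * U := by
          simp only [mul_assoc, c1, c2]
      _ = star U * (B * (U * Matrix.diagonal d * star U)) * U := by rw [h2]
      _ = (star U * B * U) * Matrix.diagonal d := by
          simp only [mul_assoc, hUU, hUU', mul_one, one_mul, c1, c2]
  have keyE : Matrix.diagonal e * (star U * B * U) = (star U * B * U) * Matrix.diagonal e := by
    refine commute_diagonal_of_commute_diagonal (fun i j hij => ?_) key
    have hij' : (RCLike.ofReal (hA.1.eigenvalues i) : ℂ) = RCLike.ofReal (hA.1.eigenvalues j) :=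
      hij
    have hev : hA.1.eigenvalues i = hA.1.eigenvalues j := RCLike.ofReal_inj.mp hij'
    show (((Real.sqrt (hA.1.eigenvalues i)) : ℝ) : ℂ) = ((Real.sqrt (hA.1.eigenvalues j) : ℝ) : ℂ)
    rw [hev]
  have hsq : hA.sqrt = U * Matrix.diagonal e * star U := rfl
  rw [hsq]
  calc (U * Matrix.diagonal e * star U) * B
      = U * (Matrix.diagonal e * (star U * B * U)) * star U := by
        simp only [mul_assoc, hUU, hUU', mul_one, one_mul, c1, c2]
    _ = U * ((star U * B * U) * Matrix.diagonal e) * star U := by rw [keyE]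
    _ = B * (U * Matrix.diagonal e * star U) := by
        simp only [mul_assoc, hUU, hUU', mul_one, one_mul, c1, c2]

lemma posSemidef_mul_of_commute {A B : Matrix n n ℂ} (hA : A.PosSemidef) (hB : B.PosSemidef)
    (h : A * B = B * A) : (A * B).PosSemidef := by
  have hc : hA.sqrt * B = B * hA.sqrt := commute_sqrt hA h
  have hherm : hA.sqrt ᴴ = hA.sqrt := hA.posSemidef_sqrt.1
  have heq : A * B = hA.sqrt * B * hA.sqrt := by
    conv_lhs => rw [← hA.sqrt_mul_self, mul_assoc, hc, ← mul_assoc]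
  have h3 := hB.mul_mul_conjTranspose_same hA.sqrt
  rw [hherm] at h3
  rw [heq]
  exact h3

lemma commute_nonsing_inv {A B : Matrix n n ℂ} (hB : IsUnit B.det) (h : A * B = B * A) :
    A * B⁻¹ = B⁻¹ * A := by
  calc A * B⁻¹ = B⁻¹ * (B * (A * B⁻¹)) := (nonsing_inv_mul_cancel_left B (A * B⁻¹) hB).symm
    _ = B⁻¹ * (A * B * B⁻¹) := by rw [← mul_assoc B A B⁻¹, ← h, mul_assoc]
    _ = B⁻¹ * A := by rw [mul_nonsing_inv_cancel_right B A hB]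

end Helpers

/-- Let `S` and `N` be Hermitian positive definite complex `s × s` matrices,
`Σ̃ = S + N`, `Ñ = (√((I+Σ̃⁻¹)⁻¹) (N⁻¹ − Σ̃⁻¹) √((I+Σ̃⁻¹)⁻¹))⁻¹`, and
`T = √(Σ̃(Σ̃+I))`.  Then `(Ñ + I)⁻¹ Σ̃ = T⁻¹ S (N + I)⁻¹ T`. -/
theorem stmt2 {s : ℕ} (S N : Matrix (Fin s) (Fin s) ℂ)
    (hS : S.PosDef) (hN : N.PosDef) :
    ((msqrt ((1 + (S + N)⁻¹)⁻¹) * (N⁻¹ - (S + N)⁻¹) * msqrt ((1 + (S + N)⁻¹)⁻¹))⁻¹ + 1)⁻¹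
        * (S + N)
      = (msqrt ((S + N) * (S + N + 1)))⁻¹ * S * (N + 1)⁻¹
          * msqrt ((S + N) * (S + N + 1)) := by
  set M : Matrix (Fin s) (Fin s) ℂ := S + N with hMdef
  have hM : M.PosDef := hS.add hN
  have hMd : IsUnit M.det := hM.det_pos.ne'.isUnit
  have hNd : IsUnit N.det := hN.det_pos.ne'.isUnit
  have hM1 : (M + 1).PosDef := hM.add_posSemidef Matrix.PosSemidef.one
  have hM1d : IsUnit (M + 1).det := hM1.det_pos.ne'.isUnit
  have hN1 : (N + 1).PosDef := hN.add_posSemidef Matrix.PosSemidef.one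
  have hN1d : IsUnit (N + 1).det := hN1.det_pos.ne'.isUnit
  have h1M : (1 + M⁻¹).PosDef := Matrix.PosDef.posSemidef_add Matrix.PosSemidef.one hM.inv
  have h1Md : IsUnit (1 + M⁻¹).det := h1M.det_pos.ne'.isUnit
  set P : Matrix (Fin s) (Fin s) ℂ := (1 + M⁻¹)⁻¹ with hPdef
  have hP : P.PosDef := h1M.inv
  have hPd : IsUnit P.det := hP.det_pos.ne'.isUnit
  have hMM1 : (M * (M + 1)).PosDef := by
    have h' : M * (M + 1) = Mᴴ * M + M := by rw [mul_add, mul_one, hM.1]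
    rw [h']
    exact Matrix.PosDef.posSemidef_add (posSemidef_conjTranspose_mul_self M) hM
  set Q : Matrix (Fin s) (Fin s) ℂ := hP.posSemidef.sqrt with hQdef
  set T : Matrix (Fin s) (Fin s) ℂ := hMM1.posSemidef.sqrt with hTdef
  have hQm : msqrt P = Q := by rw [msqrt, dif_pos hP.posSemidef]; rfl
  have hTm : msqrt (M * (M + 1)) = T := by rw [msqrt, dif_pos hMM1.posSemidef]; rfl
  have hQQ : Q * Q = P := hP.posSemidef.sqrt_mul_self
  have hTT : T * T = M * (M + 1) := hMM1.posSemidef.sqrt_mul_self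
  have hQd : IsUnit Q.det := by
    have hdet : Q.det * Q.det = P.det := by rw [← Matrix.det_mul, hQQ]
    have hne : Q.det ≠ 0 := by
      intro h0; rw [h0, mul_zero] at hdet; exact hP.det_pos.ne' hdet.symm
    exact hne.isUnit
  have hTd : IsUnit T.det := by
    have hdet : T.det * T.det = (M * (M + 1)).det := by rw [← Matrix.det_mul, hTT]
    have hne : T.det ≠ 0 := by
      intro h0; rw [h0, mul_zero] at hdet; exact hMM1.det_pos.ne' hdet.symm
    exact hne.isUnit
  -- commutation facts
  have c1M : M * (1 + M⁻¹) = (1 + M⁻¹) * M := by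
    have ha : M * (1 + M⁻¹) = M + 1 := by
      rw [mul_add, mul_one, mul_nonsing_inv _ hMd]
    have hb : (1 + M⁻¹) * M = M + 1 := by
      rw [add_mul, one_mul, nonsing_inv_mul _ hMd]
    rw [ha, hb]
  have cPM : P * M = M * P := (commute_nonsing_inv h1Md c1M).symm
  have cQM : Q * M = M * Q := commute_sqrt hP.posSemidef cPM
  have cQMc : Commute Q M := cQM
  have cTM : T * M = M * T := commute_sqrt hMM1.posSemidef (by noncomm_ring)
  have cTMc : Commute T M := cTM
  have cTQ : T * Q = Q * T :=
    commute_sqrt hMM1.posSemidef ((cQMc.mul_right (cQMc.add_right (Commute.one_right Q))).symm).eq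
  -- P = (M+1)⁻¹ * M
  have h1m : (1 : Matrix (Fin s) (Fin s) ℂ) + M⁻¹ = M⁻¹ * (M + 1) := by
    rw [mul_add, nonsing_inv_mul _ hMd, mul_one]
  have hPw : P = (M + 1)⁻¹ * M := by
    rw [hPdef, h1m, Matrix.mul_inv_rev, nonsing_inv_nonsing_inv _ hMd]
  have hstep : P * (M * (M + 1)) = M * M := by
    rw [hPw, mul_assoc, show M * (M * (M + 1)) = (M + 1) * (M * M) from by noncomm_ring,
      nonsing_inv_mul_cancel_left _ _ hM1d]
  -- Q * T = M
  have hQT : Q * T = M := by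
    have hpsd : (Q * T).PosSemidef :=
      posSemidef_mul_of_commute hP.posSemidef.posSemidef_sqrt hMM1.posSemidef.posSemidef_sqrt
        cTQ.symm
    refine hpsd.eq_of_sq_eq_sq hM.posSemidef ?_
    rw [pow_two, pow_two]
    calc Q * T * (Q * T) = Q * (Q * T * T) := by
          rw [mul_assoc, ← mul_assoc T Q T, cTQ, mul_assoc]
      _ = Q * Q * (T * T) := by simp only [mul_assoc]
      _ = P * (M * (M + 1)) := by rw [hQQ, hTT]
      _ = M * M := hstep
  have hQ_eq : Q = M * T⁻¹ := by
    rw [← hQT, mul_assoc, mul_nonsing_inv _ hTd, mul_one]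
  have hQinv : Q⁻¹ = T * M⁻¹ := by
    rw [hQ_eq, Matrix.mul_inv_rev, nonsing_inv_nonsing_inv _ hTd]
  have hTMinv : T * M⁻¹ = T⁻¹ * (M + 1) := by
    calc T * M⁻¹ = T⁻¹ * (T * T) * M⁻¹ := by
          rw [← mul_assoc, nonsing_inv_mul _ hTd, one_mul]
      _ = T⁻¹ * ((M + 1) * M) * M⁻¹ := by
          rw [hTT, show M * (M + 1) = (M + 1) * M from by noncomm_ring]
      _ = T⁻¹ * (M + 1) := by rw [mul_assoc T⁻¹, mul_nonsing_inv_cancel_right _ _ hMd]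
  have cTM1 : Commute T (M + 1) := cTMc.add_right (Commute.one_right T)
  have hTc : T * (M + 1)⁻¹ = (M + 1)⁻¹ * T := commute_nonsing_inv hM1d cTM1.eq
  have hTinvM : T⁻¹ * M = (M + 1)⁻¹ * T := by
    calc T⁻¹ * M = T⁻¹ * (M * (M + 1)) * (M + 1)⁻¹ := by
          rw [mul_assoc T⁻¹, mul_nonsing_inv_cancel_right _ _ hM1d]
      _ = T⁻¹ * (T * T) * (M + 1)⁻¹ := by rw [hTT]
      _ = T * (M + 1)⁻¹ := by rw [nonsing_inv_mul_cancel_left _ _ hTd]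
      _ = (M + 1)⁻¹ * T := hTc
  -- the middle factor
  set D : Matrix (Fin s) (Fin s) ℂ := N⁻¹ - M⁻¹ with hDdef
  have hS_eq : S = M - N := by rw [hMdef, add_sub_cancel_right]
  have hDeq : D = N⁻¹ * (S * M⁻¹) := by
    rw [hDdef, hS_eq, sub_mul, mul_nonsing_inv _ hMd, mul_sub, mul_one, ← mul_assoc,
      nonsing_inv_mul _ hNd, one_mul]
  have hDd : IsUnit D.det := by
    have : IsUnit D := by
      rw [hDeq]; exact (hN.inv.isUnit.mul (hS.isUnit.mul hM.inv.isUnit))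
    exact (Matrix.isUnit_iff_isUnit_det _).mp this
  have hQDQd : IsUnit (Q * D * Q).det := by
    rw [Matrix.det_mul, Matrix.det_mul]
    exact (hQd.mul hDd).mul hQd
  -- 1 + QDQ = Q (1 + N⁻¹) Q
  have hPinv : P⁻¹ = 1 + M⁻¹ := by rw [hPdef, nonsing_inv_nonsing_inv _ h1Md]
  have hQPQ : Q * P⁻¹ * Q = 1 := by
    rw [← hQQ, Matrix.mul_inv_rev, mul_nonsing_inv_cancel_left _ _ hQd, nonsing_inv_mul _ hQd]
  have h1QDQ : 1 + Q * D * Q = Q * (1 + N⁻¹) * Q := by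
    calc (1 : Matrix (Fin s) (Fin s) ℂ) + Q * D * Q
        = Q * P⁻¹ * Q + Q * D * Q := by rw [hQPQ]
      _ = Q * (P⁻¹ + D) * Q := by noncomm_ring
      _ = Q * (1 + N⁻¹) * Q := by
          rw [hPinv, hDdef, show (1 + M⁻¹) + (N⁻¹ - M⁻¹) = (1 : Matrix (Fin s) (Fin s) ℂ) + N⁻¹
            from by abel]
  -- (1+N⁻¹)⁻¹ D = (N+1)⁻¹ S M⁻¹
  have h1n : (1 : Matrix (Fin s) (Fin s) ℂ) + N⁻¹ = N⁻¹ * (N + 1) := by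
    rw [mul_add, nonsing_inv_mul _ hNd, mul_one]
  have h1Ninv : ((1 : Matrix (Fin s) (Fin s) ℂ) + N⁻¹)⁻¹ = (N + 1)⁻¹ * N := by
    rw [h1n, Matrix.mul_inv_rev, nonsing_inv_nonsing_inv _ hNd]
  have h1Ninv_D : ((1 : Matrix (Fin s) (Fin s) ℂ) + N⁻¹)⁻¹ * D = (N + 1)⁻¹ * (S * M⁻¹) := by
    rw [h1Ninv, hDdef, mul_assoc, mul_sub, mul_nonsing_inv _ hNd, hS_eq, sub_mul,
      mul_nonsing_inv _ hMd]
  -- assemble the inverse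
  have step1 : (Q * D * Q)⁻¹ + 1 = (Q * D * Q)⁻¹ * (1 + Q * D * Q) := by
    rw [mul_add, mul_one, nonsing_inv_mul _ hQDQd]
  have step2 : ((Q * D * Q)⁻¹ + 1)⁻¹ = (1 + Q * D * Q)⁻¹ * (Q * D * Q) := by
    rw [step1, Matrix.mul_inv_rev, nonsing_inv_nonsing_inv _ hQDQd]
  have step3 : (1 + Q * D * Q)⁻¹ = Q⁻¹ * ((1 + N⁻¹)⁻¹ * Q⁻¹) := by
    rw [h1QDQ, Matrix.mul_inv_rev, Matrix.mul_inv_rev]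
  have hN1S : (M + 1) * ((N + 1)⁻¹ * S) = S * (N + 1)⁻¹ * (M + 1) := by
    have hM1S : M + 1 = S + (N + 1) := by rw [hMdef, add_assoc]
    have hl : (M + 1) * ((N + 1)⁻¹ * S) = S * ((N + 1)⁻¹ * S) + S := by
      rw [hM1S, add_mul, mul_nonsing_inv_cancel_left _ _ hN1d]
    have hr : S * (N + 1)⁻¹ * (M + 1) = S * ((N + 1)⁻¹ * S) + S := by
      rw [hM1S, mul_add, nonsing_inv_mul_cancel_right _ _ hN1d, mul_assoc]
    rw [hl, hr]
  rw [hQm, hTm]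
  calc ((Q * D * Q)⁻¹ + 1)⁻¹ * M
      = Q⁻¹ * ((1 + N⁻¹)⁻¹ * Q⁻¹) * (Q * D * Q) * M := by rw [step2, step3]
    _ = Q⁻¹ * ((1 + N⁻¹)⁻¹ * D) * Q * M := by
        simp only [mul_assoc, nonsing_inv_mul_cancel_left (h := hQd)]
    _ = Q⁻¹ * ((N + 1)⁻¹ * (S * M⁻¹)) * Q * M := by rw [h1Ninv_D]
    _ = T * M⁻¹ * ((N + 1)⁻¹ * (S * M⁻¹)) * (M * T⁻¹) * M := by rw [hQinv, hQ_eq]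
    _ = T * M⁻¹ * ((N + 1)⁻¹ * (S * (T⁻¹ * M))) := by
        simp only [mul_assoc, nonsing_inv_mul_cancel_left (h := hMd)]
    _ = T⁻¹ * (M + 1) * ((N + 1)⁻¹ * (S * ((M + 1)⁻¹ * T))) := by rw [hTMinv, hTinvM]
    _ = T⁻¹ * ((M + 1) * ((N + 1)⁻¹ * S)) * ((M + 1)⁻¹ * T) := by simp only [mul_assoc]
    _ = T⁻¹ * (S * (N + 1)⁻¹ * (M + 1)) * ((M + 1)⁻¹ * T) := by rw [hN1S]
    _ = T⁻¹ * S * (N + 1)⁻¹ * T := by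
        simp only [mul_assoc, mul_nonsing_inv_cancel_left (h := hM1d)]
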